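/- For any feasible solution x' to (IP') there exists a feasible solution x to (IP) with the same objective value: ∑_{j∈𝒥} ∑_{t∈𝒯} f_j(t) x_{jt} = ∑_{j∈𝒥} ∑_{t∈𝒯̂} f'_j(t) x'_{jt}. -/

import Mathlib

open Finset
open scoped Classical

/-- `t` belongs to class `k` of the cost function `g`: class `0` is `{t : g t = 0}` and,
for `k ≥ 1`, class `k` is `{t : (1+ε)^(k−1) ≤ g t < (1+ε)^k}`. -/
def InClass (ε : ℝ) (g : ℕ → ℕ) (k t : ℕ) : Prop :=
  if k = 0 then g t = 0
  else (1 + ε) ^ (k - 1) ≤ (g t : ℝ) ∧ (g t : ℝ) < (1 + ε) ^ k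

/-- The set `𝒯̂_j` of left endpoints: the times `t ∈ 𝒯 = {1,…,T}` that are the minimum
element of some (nonempty) class of `g`. -/
noncomputable def leftEnds (T : ℕ) (ε : ℝ) (g : ℕ → ℕ) : Finset ℕ :=
  (Icc 1 T).filter fun t => ∃ k : ℕ,
    InClass ε g k t ∧ ∀ s ∈ Icc 1 T, InClass ε g k s → t ≤ s

/-- The set of interval endpoints `𝒯̂ = (∪_{j∈𝒥} 𝒯̂_j) ∪ {1}`. -/
noncomputable def That {n : ℕ} (T : ℕ) (ε : ℝ) (f : Fin n → ℕ → ℕ) : Finset ℕ :=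
  (univ.biUnion fun j => leftEnds T ε (f j)) ∪ {1}

/-- The rounded cost function `f'`: writing `𝒯̂ = {t_1 < t_2 < ⋯ < t_τ}`, we set
`f'_j(t_i) = f_j(t_{i+1} − 1)` for `i < τ` and `f'_j(t_τ) = f_j(T)`.  (For `t ∈ 𝒯̂`, the
`min` below is the next endpoint of `𝒯̂` after `t`, or `T + 1` if there is none.) -/
noncomputable def fround {n : ℕ} (T : ℕ) (ε : ℝ) (f : Fin n → ℕ → ℕ)
    (j : Fin n) (t : ℕ) : ℕ :=
  f j ((WithTop.untopD (T + 1) ((That T ε f).filter fun s => t < s).min) - 1)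

noncomputable def nextEnd (T : ℕ) (S : Finset ℕ) (t : ℕ) : ℕ :=
  (WithTop.untopD (T + 1) (S.filter fun s => t < s).min) - 1

lemma nextEnd_le {T : ℕ} {S : Finset ℕ} (hsub : S ⊆ Finset.Icc 1 T) (u : ℕ) :
    nextEnd T S u ≤ T := by
  unfold nextEnd
  rcases (S.filter fun s => u < s).eq_empty_or_nonempty with h | h
  · simp [h]
  · rw [← Finset.coe_min' h, WithTop.untopD_coe]
    have := (Finset.mem_Icc.mp (hsub (Finset.mem_of_mem_filter _ (Finset.min'_mem _ h)))).2
    omega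

lemma le_nextEnd {T : ℕ} {S : Finset ℕ} (hsub : S ⊆ Finset.Icc 1 T) {u : ℕ} (hu : u ∈ S) :
    u ≤ nextEnd T S u := by
  unfold nextEnd
  rcases (S.filter fun s => u < s).eq_empty_or_nonempty with h | h
  · have := (Finset.mem_Icc.mp (hsub hu)).2
    simp [h]; omega
  · rw [← Finset.coe_min' h, WithTop.untopD_coe]
    have := (Finset.mem_filter.mp (Finset.min'_mem _ h)).2
    omega

lemma nextEnd_lt {T : ℕ} {S : Finset ℕ} {u v : ℕ} (hv : v ∈ S) (huv : u < v) (h1 : 1 ≤ v) :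
    nextEnd T S u < v := by
  have hmem : v ∈ S.filter fun s => u < s := Finset.mem_filter.mpr ⟨hv, huv⟩
  have hne : (S.filter fun s => u < s).Nonempty := ⟨v, hmem⟩
  unfold nextEnd
  rw [← Finset.coe_min' hne, WithTop.untopD_coe]
  have := Finset.min'_le _ v hmem
  omega

lemma nextEnd_ge {T t : ℕ} {S : Finset ℕ} (hsub : S ⊆ Finset.Icc 1 T) {u : ℕ} (hu : u ∈ S)
    (ht : t ≤ T) (hgap : ∀ v ∈ S, u < v → t < v) : t ≤ nextEnd T S u := by
  unfold nextEnd
  rcases (S.filter fun s => u < s).eq_empty_or_nonempty with h | h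
  · simp [h]; omega
  · rw [← Finset.coe_min' h, WithTop.untopD_coe]
    have hm := Finset.min'_mem _ h
    have := hgap _ (Finset.mem_of_mem_filter _ hm) (Finset.mem_filter.mp hm).2
    omega

lemma sum_fiber_filter (S B : Finset ℕ) (g : ℕ → ℕ) (F : ℕ → ℕ) :
    ∑ s ∈ B, ∑ u ∈ S.filter (fun u => g u = s), F u
      = ∑ u ∈ S.filter (fun u => g u ∈ B), F u := by
  rw [← Finset.sum_fiberwise_of_maps_to (t := B)
    (fun u hu => (Finset.mem_filter.mp hu).2) F]
  refine Finset.sum_congr rfl fun s hs => Finset.sum_congr ?_ fun _ _ => rfl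
  rw [Finset.filter_filter]
  refine Finset.filter_congr fun u _ => ?_
  constructor
  · intro h; exact ⟨h ▸ hs, h⟩
  · rintro ⟨_, h2⟩; exact h2

/-- For any feasible solution `x'` to (IP') there exists a feasible
solution `x` to (IP) with the same objective value:
`∑_{j∈𝒥} ∑_{t∈𝒯} f_j(t) x_{jt} = ∑_{j∈𝒥} ∑_{t∈𝒯̂} f'_j(t) x'_{jt}`.
(Here `D(t) = T − t + 1`, written as the truncated subtraction `T + 1 - t`.) -/
theorem stmt_13 {n : ℕ} (ε : ℝ) (hε : 0 < ε)
    (p : Fin n → ℕ) (hp : ∀ j, 0 < p j)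
    (T : ℕ) (hT : T = ∑ j, p j)
    (f : Fin n → ℕ → ℕ) (hf0 : ∀ j, f j 0 = 0)
    (hfmono : ∀ j, ∀ s t : ℕ, s ≤ t → t ≤ T → f j s ≤ f j t)
    (x' : Fin n → ℕ → ℕ)
    (hx01 : ∀ j t, x' j t = 0 ∨ x' j t = 1)
    (hxa : ∀ j, ∑ t ∈ That T ε f, x' j t = 1)
    (hxc : ∀ t ∈ That T ε f,
      T + 1 - t ≤ ∑ j, ∑ s ∈ (That T ε f).filter (fun s => t ≤ s), p j * x' j s) :
    ∃ x : Fin n → ℕ → ℕ,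
      (∀ j t, x j t = 0 ∨ x j t = 1) ∧
      (∀ j, ∑ t ∈ Icc 1 T, x j t = 1) ∧
      (∀ t ∈ Icc 1 T, T + 1 - t ≤ ∑ j, ∑ s ∈ Icc t T, p j * x j s) ∧
      ∑ j, ∑ t ∈ Icc 1 T, f j t * x j t = ∑ j, ∑ t ∈ That T ε f, fround T ε f j t * x' j t := by
  classical
  rcases Nat.eq_zero_or_pos n with hn | hn
  · subst hn
    have hT0 : T = 0 := by simp [hT]
    refine ⟨fun _ _ => 0, fun j t => Or.inl rfl, fun j => j.elim0, ?_, ?_⟩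
    · intro t ht
      rw [hT0] at ht
      simp at ht
    · simp
  · have hT1 : 1 ≤ T := by
      have h1 : p ⟨0, hn⟩ ≤ ∑ j, p j :=
        Finset.single_le_sum (fun _ _ => Nat.zero_le _) (Finset.mem_univ _)
      have := hp ⟨0, hn⟩
      omega
    set S := That T ε f with hSdef
    have h1S : 1 ∈ S := by simp [hSdef, That]
    have hsub : S ⊆ Finset.Icc 1 T := by
      intro s hs
      rw [hSdef, That, Finset.mem_union, Finset.mem_singleton] at hs
      rcases hs with hs | rfl
      · obtain ⟨j, _, hj⟩ := Finset.mem_biUnion.mp hs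
        exact Finset.filter_subset _ _ hj
      · exact Finset.mem_Icc.mpr ⟨le_refl 1, hT1⟩
    set r : ℕ → ℕ := nextEnd T S with hrdef
    have hinj : ∀ u ∈ S, ∀ v ∈ S, r u = r v → u = v := by
      intro u hu v hv huv
      rcases lt_trichotomy u v with h | h | h
      · have h1 : r u < v := nextEnd_lt (T := T) hv h (Finset.mem_Icc.mp (hsub hv)).1
        have h2 : v ≤ r v := le_nextEnd hsub hv
        omega
      · exact h
      · have h1 : r v < u := nextEnd_lt (T := T) hu h (Finset.mem_Icc.mp (hsub hu)).1
        have h2 : u ≤ r u := le_nextEnd hsub hu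
        omega
    have hmaps : ∀ u ∈ S, r u ∈ Finset.Icc 1 T := fun u hu => Finset.mem_Icc.mpr
      ⟨le_trans (Finset.mem_Icc.mp (hsub hu)).1 (le_nextEnd hsub hu), nextEnd_le hsub u⟩
    set x : Fin n → ℕ → ℕ := fun j t => ∑ u ∈ S.filter (fun u => r u = t), x' j u with hxdef
    refine ⟨x, ?_, ?_, ?_, ?_⟩
    · intro j t
      rcases (S.filter fun u => r u = t).eq_empty_or_nonempty with h | ⟨u, hu⟩
      · left; simp [hxdef, h]
      · have hsing : S.filter (fun u => r u = t) = {u} := by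
          refine Finset.eq_singleton_iff_unique_mem.mpr ⟨hu, fun v hv => ?_⟩
          exact hinj v (Finset.mem_of_mem_filter _ hv) u (Finset.mem_of_mem_filter _ hu)
            (by rw [(Finset.mem_filter.mp hv).2, (Finset.mem_filter.mp hu).2])
        rw [hxdef]
        simp only [hsing, Finset.sum_singleton]
        exact hx01 j u
    · intro j
      rw [hxdef]
      simp only []
      rw [Finset.sum_fiberwise_of_maps_to hmaps (x' j)]
      exact hxa j
    · intro t ht
      obtain ⟨h1t, htT⟩ := Finset.mem_Icc.mp ht
      have hFne : (S.filter fun s => s ≤ t).Nonempty := ⟨1, Finset.mem_filter.mpr ⟨h1S, h1t⟩⟩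
      set t' := (S.filter fun s => s ≤ t).max' hFne with ht'def
      have ht'mem := Finset.max'_mem _ hFne
      have ht'S : t' ∈ S := Finset.mem_of_mem_filter _ ht'mem
      have ht'le : t' ≤ t := (Finset.mem_filter.mp ht'mem).2
      have hiff : ∀ u ∈ S, (r u ∈ Finset.Icc t T ↔ t' ≤ u) := by
        intro u hu
        rw [Finset.mem_Icc]
        constructor
        · rintro ⟨h1, _⟩
          by_contra hlt
          push_neg at hlt
          have h2 : r u < t' := nextEnd_lt (T := T) ht'S hlt (Finset.mem_Icc.mp (hsub ht'S)).1
          omega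
        · intro h
          refine ⟨nextEnd_ge hsub hu htT ?_, nextEnd_le hsub u⟩
          intro v hv huv
          by_contra hvt
          push_neg at hvt
          have h2 : v ≤ t' := Finset.le_max' (S.filter fun s => s ≤ t) v (Finset.mem_filter.mpr ⟨hv, hvt⟩)
          omega
      have key : ∀ j, ∑ s ∈ Finset.Icc t T, p j * x j s
          = ∑ u ∈ S.filter (fun u => t' ≤ u), p j * x' j u := by
        intro j
        have h1 : ∑ s ∈ Finset.Icc t T, p j * x j s
            = ∑ s ∈ Finset.Icc t T, ∑ u ∈ S.filter (fun u => r u = s), p j * x' j u := by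
          refine Finset.sum_congr rfl fun s _ => ?_
          rw [hxdef, Finset.mul_sum]
        rw [h1, sum_fiber_filter]
        refine Finset.sum_congr ?_ fun _ _ => rfl
        exact Finset.filter_congr fun u hu => by simp [hiff u hu]
      calc T + 1 - t ≤ T + 1 - t' := Nat.sub_le_sub_left ht'le _
        _ ≤ ∑ j, ∑ s ∈ S.filter (fun s => t' ≤ s), p j * x' j s := hxc t' ht'S
        _ = ∑ j, ∑ s ∈ Finset.Icc t T, p j * x j s :=
            Finset.sum_congr rfl fun j _ => (key j).symm
    · refine Finset.sum_congr rfl fun j _ => ?_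
      have h1 : ∀ t ∈ Finset.Icc 1 T, f j t * x j t
          = ∑ u ∈ S.filter (fun u => r u = t), f j (r u) * x' j u := by
        intro t _
        rw [hxdef, Finset.mul_sum]
        exact Finset.sum_congr rfl fun u hu => by rw [(Finset.mem_filter.mp hu).2]
      rw [Finset.sum_congr rfl h1, Finset.sum_fiberwise_of_maps_to hmaps]
      exact Finset.sum_congr rfl fun u _ => rfl
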